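/- arXiv:2507.17954 — 5 statements merged into one kernel-verified Lean document; each statement's English description precedes it below -/
import Mathlib

section
/- Let p ≥ 1 be an integer, n ∈ ℤ, t ∈ ℝ, and R > 1. Then (1/2πi) ∮_{|w|=R} e^{t(w−1)} (w−1)^{−p} w^{−(n−p+1)} dw = e^{−t} ∑_{k=0}^∞ binom(k+p−1, p−1) · t^{k+n}/(k+n)!, where terms with k + n < 0 are interpreted as 0, and the series on the right converges absolutely. -/
set_option maxHeartbeats 1000000

open Complex MeasureTheory Metric

namespace Stmt9Aux

noncomputable def cc (p : ℕ) (t : ℝ) (k j : ℕ) : ℂ :=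
  ((k + (p - 1)).choose (p - 1) : ℂ) * ((t : ℂ) ^ j / (j.factorial : ℂ))

noncomputable def FF (p : ℕ) (n : ℤ) (t : ℝ) (q : ℕ × ℕ) (w : ℂ) : ℂ :=
  Complex.exp (-(t : ℂ)) * cc p t q.1 q.2 * w ^ ((q.2 : ℤ) - q.1 - n - 1)

lemma normA {w : ℂ} (hw : 1 < ‖w‖) (p : ℕ) :
    Summable fun k : ℕ => ‖((k + (p - 1)).choose (p - 1) : ℂ) * (w⁻¹) ^ k‖ := by
  have hx : ‖(‖w⁻¹‖ : ℝ)‖ < 1 := by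
    rw [Real.norm_eq_abs, _root_.abs_of_nonneg (norm_nonneg _), norm_inv]
    rw [inv_lt_one_iff₀]; right; exact hw
  have := (hasSum_choose_mul_geometric_of_norm_lt_one (𝕜 := ℝ) (p - 1) hx).summable
  apply this.congr
  intro k
  simp [norm_mul, norm_pow, Complex.norm_natCast]

lemma normB (z : ℂ) : Summable fun j : ℕ => ‖z ^ j / (j.factorial : ℂ)‖ := by
  have := Real.summable_pow_div_factorial ‖z‖
  apply this.congr
  intro j
  simp [norm_div, norm_pow, Complex.norm_natCast]

lemma hasSum_FF (p : ℕ) (hp : 1 ≤ p) (n : ℤ) (t : ℝ) {w : ℂ} (hw : 1 < ‖w‖) :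
    HasSum (fun q : ℕ × ℕ => FF p n t q w)
      (Complex.exp ((t : ℂ) * (w - 1)) * (w - 1) ^ (-(p : ℤ)) * w ^ (-(n - (p : ℤ) + 1))) := by
  have hw0 : w ≠ 0 := by intro h; rw [h] at hw; simp at hw; linarith
  have hw1 : w - 1 ≠ 0 := by
    intro h; rw [sub_eq_zero] at h; rw [h] at hw; simp at hw
  have hx : ‖w⁻¹‖ < 1 := by rw [norm_inv, inv_lt_one_iff₀]; right; exact hw
  have h1 : HasSum (fun k : ℕ => ((k + (p - 1)).choose (p - 1) : ℂ) * (w⁻¹) ^ k)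
      (1 / (1 - w⁻¹) ^ ((p - 1) + 1)) :=
    hasSum_choose_mul_geometric_of_norm_lt_one (p - 1) hx
  have h2 : HasSum (fun j : ℕ => ((t : ℂ) * w) ^ j / (j.factorial : ℂ))
      (Complex.exp ((t : ℂ) * w)) := by
    rw [Complex.exp_eq_exp_ℂ]
    exact NormedSpace.expSeries_div_hasSum_exp ((t : ℂ) * w)
  have hs := summable_mul_of_summable_norm (normA hw p) (normB ((t : ℂ) * w))
  have hmul0 := h1.mul h2 hs
  have hmul := hmul0.mul_left (Complex.exp (-(t : ℂ)) * w ^ (-n - 1 : ℤ))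
  convert hmul using 1
  · rfl
  · funext q
    obtain ⟨k, j⟩ := q
    simp only [FF, cc]
    have e1 : (w⁻¹ : ℂ) ^ k = w ^ (-(k : ℤ)) := by
      rw [inv_pow, ← zpow_natCast, ← zpow_neg]
    have e2 : ((t : ℂ) * w) ^ j = (t : ℂ) ^ j * w ^ (j : ℤ) := by
      rw [mul_pow, zpow_natCast]
    rw [e1, e2]
    rw [show ((j : ℤ) - k - n - 1) = (-n - 1) + (-(k : ℤ)) + j by ring,
      zpow_add₀ hw0, zpow_add₀ hw0]
    ring
  · have hpow : (1 - w⁻¹) = (w - 1) * w⁻¹ := by field_simp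
    rw [show (p - 1) + 1 = p from by omega, hpow, mul_pow]
    rw [show -(n - (p : ℤ) + 1) = (p : ℤ) + (-n - 1) by ring, zpow_add₀ hw0,
      zpow_natCast, zpow_neg, zpow_natCast]
    rw [show (t : ℂ) * (w - 1) = (t : ℂ) * w + (-(t : ℂ)) by ring, Complex.exp_add]
    rw [inv_pow]
    field_simp

lemma circleIntegral_zpow {R : ℝ} (hR : 0 < R) (m : ℤ) :
    (∮ w in C(0, R), w ^ m) = if m = -1 then (2 * Real.pi * Complex.I) else 0 := by
  split_ifs with h
  · subst h
    have := circleIntegral.integral_sub_inv_of_mem_ball (mem_ball_self hR (x := (0 : ℂ)))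
    simp only [sub_zero] at this
    rw [← this]
    apply circleIntegral.integral_congr hR.le
    intro z hz
    simp [zpow_neg_one]
  · have := circleIntegral.integral_sub_zpow_of_ne h 0 0 R
    simp only [sub_zero] at this
    exact this

lemma integral_FF (p : ℕ) (n : ℤ) (t : ℝ) {R : ℝ} (hR : 0 < R) (q : ℕ × ℕ) :
    (∮ w in C(0, R), FF p n t q w)
      = if (q.2 : ℤ) = (q.1 : ℤ) + n then
          (2 * Real.pi * Complex.I) * (Complex.exp (-(t : ℂ)) * cc p t q.1 q.2) else 0 := by
  have h1 : (∮ w in C(0, R), FF p n t q w)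
      = (Complex.exp (-(t : ℂ)) * cc p t q.1 q.2) •
        ∮ w in C(0, R), w ^ ((q.2 : ℤ) - q.1 - n - 1) := by
    rw [← circleIntegral.integral_smul]
    apply circleIntegral.integral_congr hR.le
    intro z hz
    simp [FF, smul_eq_mul, mul_assoc]
  rw [h1, circleIntegral_zpow hR]
  by_cases h : (q.2 : ℤ) = (q.1 : ℤ) + n
  · rw [if_pos h, if_pos (by omega)]
    simp [smul_eq_mul]; ring
  · rw [if_neg h, if_neg (by omega)]
    simp

lemma norm_cc (p : ℕ) (t : ℝ) (k j : ℕ) :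
    ‖cc p t k j‖ = ((k + (p - 1)).choose (p - 1) : ℝ) * (|t| ^ j / (j.factorial : ℝ)) := by
  simp [cc, norm_mul, norm_div, norm_pow, Complex.norm_natCast, Complex.norm_real,
    Real.norm_eq_abs]

lemma norm_circleMap {R : ℝ} (hR : 0 < R) (θ : ℝ) : ‖circleMap 0 R θ‖ = R := by
  rw [norm_circleMap_zero, abs_of_pos hR]

lemma circleMap_ne_zero' {R : ℝ} (hR : 0 < R) (θ : ℝ) : circleMap 0 R θ ≠ 0 := by
  intro h
  have := norm_circleMap hR θ
  rw [h] at this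
  simp at this
  exact absurd this.symm (ne_of_gt hR)

lemma norm_G (p : ℕ) (n : ℤ) (t : ℝ) {R : ℝ} (hR : 0 < R) (q : ℕ × ℕ) (θ : ℝ) :
    ‖deriv (circleMap 0 R) θ • FF p n t q (circleMap 0 R θ)‖
      = Real.exp (-t) * ((((q.1 : ℕ) + (p - 1)).choose (p - 1) : ℝ)
          * (|t| ^ q.2 / (q.2.factorial : ℝ))) * (R * R ^ ((q.2 : ℤ) - q.1 - n - 1)) := by
  rw [norm_smul, deriv_circleMap, norm_mul, Complex.norm_I, mul_one]
  rw [FF, norm_mul, norm_mul, norm_zpow, norm_circleMap hR, norm_cc]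
  have : ‖Complex.exp (-(t : ℂ))‖ = Real.exp (-t) := by
    rw [Complex.norm_exp]
    norm_num
  rw [this]
  ring

lemma interchange (p : ℕ) (hp : 1 ≤ p) (n : ℤ) (t : ℝ) {R : ℝ} (hR : 1 < R)
    (key : ∀ w : ℂ, ‖w‖ = R →
      (∑' q : ℕ × ℕ, FF p n t q w)
        = Complex.exp ((t : ℂ) * (w - 1)) * (w - 1) ^ (-(p : ℤ)) * w ^ (-(n - (p : ℤ) + 1))) :
    (∮ w in C(0, R),
        Complex.exp ((t : ℂ) * (w - 1)) * (w - 1) ^ (-(p : ℤ)) * w ^ (-(n - (p : ℤ) + 1)))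
      = ∑' q : ℕ × ℕ, ∮ w in C(0, R), FF p n t q w := by
  have hR0 : (0 : ℝ) < R := lt_trans one_pos hR
  have h2π : (0 : ℝ) ≤ 2 * Real.pi := by positivity
  set G : ℕ × ℕ → ℝ → ℂ :=
    fun q θ => deriv (circleMap 0 R) θ • FF p n t q (circleMap 0 R θ) with hG
  have hcont : ∀ q, Continuous (G q) := by
    intro q
    rw [hG]
    simp only [deriv_circleMap]
    apply Continuous.fun_smul
    · exact (continuous_circleMap 0 R).mul continuous_const
    · apply Continuous.mul continuous_const
      exact (continuous_circleMap 0 R).zpow₀ _ (fun θ => Or.inl (circleMap_ne_zero' hR0 θ))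
  have hint : ∀ q, Integrable (G q) (volume.restrict (Set.Ioc 0 (2 * Real.pi))) :=
    fun q => (hcont q).integrableOn_Ioc
  have hval : ∀ q : ℕ × ℕ, (∫ θ in Set.Ioc 0 (2 * Real.pi), ‖G q θ‖)
      = (2 * Real.pi) * (Real.exp (-t) * ((((q.1 : ℕ) + (p - 1)).choose (p - 1) : ℝ)
          * (|t| ^ q.2 / (q.2.factorial : ℝ))) * (R * R ^ ((q.2 : ℤ) - q.1 - n - 1))) := by
    intro q
    have : ∀ θ : ℝ, ‖G q θ‖ = Real.exp (-t) * ((((q.1 : ℕ) + (p - 1)).choose (p - 1) : ℝ)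
          * (|t| ^ q.2 / (q.2.factorial : ℝ))) * (R * R ^ ((q.2 : ℤ) - q.1 - n - 1)) :=
      fun θ => norm_G p n t hR0 q θ
    simp only [this]
    rw [setIntegral_const, measureReal_def, Real.volume_Ioc, smul_eq_mul]
    congr 1
    rw [ENNReal.toReal_ofReal (by linarith)]
    ring
  have hsum : Summable fun q : ℕ × ℕ => ∫ θ in Set.Ioc 0 (2 * Real.pi), ‖G q θ‖ := by
    have hu : Summable fun k : ℕ => (((k : ℕ) + (p - 1)).choose (p - 1) : ℝ) * (R⁻¹) ^ k := by
      apply summable_choose_mul_geometric_of_norm_lt_one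
      rw [Real.norm_eq_abs, _root_.abs_of_nonneg (by positivity), inv_lt_one_iff₀]
      right; exact hR
    have hv : Summable fun j : ℕ => (|t| * R) ^ j / (j.factorial : ℝ) :=
      Real.summable_pow_div_factorial _
    have huv := (hu.mul_of_nonneg hv (fun k => by positivity) (fun j => by positivity)).mul_left
      ((2 * Real.pi) * (Real.exp (-t) * (R * R ^ (-n - 1 : ℤ))))
    apply huv.congr
    intro q
    rw [hval q]
    have e1 : (R⁻¹ : ℝ) ^ q.1 = R ^ (-(q.1 : ℤ)) := by
      rw [inv_pow, ← zpow_natCast, ← zpow_neg]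
    have e2 : (|t| * R) ^ q.2 = |t| ^ q.2 * R ^ (q.2 : ℤ) := by
      rw [mul_pow, zpow_natCast]
    rw [e1, e2, show ((q.2 : ℤ) - q.1 - n - 1) = (-n - 1) + (-(q.1 : ℤ)) + q.2 by ring,
      zpow_add₀ (ne_of_gt hR0), zpow_add₀ (ne_of_gt hR0)]
    ring
  have hker : ∀ θ : ℝ, deriv (circleMap 0 R) θ •
      (Complex.exp ((t : ℂ) * (circleMap 0 R θ - 1)) * (circleMap 0 R θ - 1) ^ (-(p : ℤ))
        * (circleMap 0 R θ) ^ (-(n - (p : ℤ) + 1))) = ∑' q : ℕ × ℕ, G q θ := by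
    intro θ
    rw [← key _ (norm_circleMap hR0 θ), hG]
    simp only [smul_eq_mul]
    rw [tsum_mul_left]
  calc (∮ w in C(0, R),
        Complex.exp ((t : ℂ) * (w - 1)) * (w - 1) ^ (-(p : ℤ)) * w ^ (-(n - (p : ℤ) + 1)))
      = ∫ θ in (0 : ℝ)..(2 * Real.pi), deriv (circleMap 0 R) θ •
          (Complex.exp ((t : ℂ) * (circleMap 0 R θ - 1)) * (circleMap 0 R θ - 1) ^ (-(p : ℤ))
            * (circleMap 0 R θ) ^ (-(n - (p : ℤ) + 1))) := rfl
    _ = ∫ θ in Set.Ioc (0 : ℝ) (2 * Real.pi), (∑' q : ℕ × ℕ, G q θ) := by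
        rw [intervalIntegral.integral_of_le h2π]
        simp only [hker]
    _ = ∑' q : ℕ × ℕ, ∫ θ in Set.Ioc (0 : ℝ) (2 * Real.pi), G q θ :=
        (integral_tsum_of_summable_integral_norm hint hsum).symm
    _ = ∑' q : ℕ × ℕ, ∮ w in C(0, R), FF p n t q w := by
        congr 1
        funext q
        rw [← intervalIntegral.integral_of_le h2π]
        rfl

lemma diag_tsum (p : ℕ) (n : ℤ) (t : ℝ) :
    (∑' q : ℕ × ℕ, if (q.2 : ℤ) = (q.1 : ℤ) + n then
        (2 * Real.pi * Complex.I) * (Complex.exp (-(t : ℂ)) * cc p t q.1 q.2) else 0)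
      = ∑' k : ℕ, (if 0 ≤ (k : ℤ) + n then
          (2 * Real.pi * Complex.I) *
            (Complex.exp (-(t : ℂ)) * cc p t k ((k : ℤ) + n).toNat) else 0) := by
  set f : ℕ × ℕ → ℂ := fun q => if (q.2 : ℤ) = (q.1 : ℤ) + n then
    (2 * Real.pi * Complex.I) * (Complex.exp (-(t : ℂ)) * cc p t q.1 q.2) else 0 with hf
  set g : ℕ → ℂ := fun k => if 0 ≤ (k : ℤ) + n then
    (2 * Real.pi * Complex.I) *
      (Complex.exp (-(t : ℂ)) * cc p t k ((k : ℤ) + n).toNat) else 0 with hg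
  apply tsum_eq_tsum_of_ne_zero_bij (fun x : Function.support g => (x.1, ((x.1 : ℤ) + n).toNat))
  · intro x y hxy
    have : (x : ℕ) = (y : ℕ) := congrArg Prod.fst hxy
    exact Subtype.ext this
  · intro q hq
    rw [Function.mem_support] at hq
    have hcond : (q.2 : ℤ) = (q.1 : ℤ) + n := by
      by_contra h
      exact hq (if_neg h)
    have hpos : 0 ≤ (q.1 : ℤ) + n := hcond ▸ Int.natCast_nonneg q.2
    have hq2 : (((q.1 : ℤ) + n).toNat) = q.2 := by omega
    have hgne : g q.1 ≠ 0 := by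
      simp only [hg]
      rw [if_pos hpos, hq2]
      simpa only [if_pos hcond] using hq
    exact ⟨⟨q.1, hgne⟩, by simp [hq2]⟩
  · rintro ⟨k, hk⟩
    have hk' : g k ≠ 0 := hk
    have hpos : 0 ≤ (k : ℤ) + n := by
      by_contra h
      exact hk' (if_neg h)
    have hcond : ((((k : ℤ) + n).toNat : ℕ) : ℤ) = (k : ℤ) + n := Int.toNat_of_nonneg hpos
    simp only [if_pos hcond, if_pos hpos, hg]

lemma summable_abs (p : ℕ) (hp : 1 ≤ p) (n : ℤ) (t : ℝ) {R : ℝ} (hR : 1 < R) :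
    Summable (fun k : ℕ =>
      |if 0 ≤ (k : ℤ) + n then
          ((k + p - 1).choose (p - 1) : ℝ) * t ^ ((k : ℤ) + n).toNat /
            (((k : ℤ) + n).toNat.factorial : ℝ)
        else 0|) := by
  have hR0 : (0 : ℝ) < R := lt_trans one_pos hR
  have hu : Summable fun k : ℕ => (((k : ℕ) + (p - 1)).choose (p - 1) : ℝ) * (R⁻¹) ^ k := by
    apply summable_choose_mul_geometric_of_norm_lt_one
    rw [Real.norm_eq_abs, _root_.abs_of_nonneg (by positivity), inv_lt_one_iff₀]
    right; exact hR
  have hv : Summable fun j : ℕ => (|t| * R) ^ j / (j.factorial : ℝ) :=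
    Real.summable_pow_div_factorial _
  have huv := hu.mul_of_nonneg hv (fun k => by positivity) (fun j => by positivity)
  have hinj : Function.Injective (fun k : ℕ => ((k, ((k : ℤ) + n).toNat) : ℕ × ℕ)) :=
    fun a b h => congrArg Prod.fst h
  have hcomp := (huv.comp_injective hinj).mul_left (R ^ (-n : ℤ))
  apply Summable.of_nonneg_of_le (fun k => abs_nonneg _) _ hcomp
  intro k
  simp only [Function.comp_apply]
  by_cases h : 0 ≤ (k : ℤ) + n
  · rw [if_pos h]
    set m : ℕ := ((k : ℤ) + n).toNat with hm
    have hmz : (m : ℤ) = (k : ℤ) + n := Int.toNat_of_nonneg h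
    have habs : |((k + p - 1).choose (p - 1) : ℝ) * t ^ m / (m.factorial : ℝ)|
        = ((k + p - 1).choose (p - 1) : ℝ) * |t| ^ m / (m.factorial : ℝ) := by
      rw [_root_.abs_div, _root_.abs_mul, _root_.abs_pow, Nat.abs_cast, Nat.abs_cast]
    rw [habs]
    have hch : (k + p - 1) = k + (p - 1) := by omega
    rw [hch]
    have e1 : (R⁻¹ : ℝ) ^ k = R ^ (-(k : ℤ)) := by
      rw [inv_pow, ← zpow_natCast, ← zpow_neg]
    have e2 : (|t| * R) ^ m = |t| ^ m * R ^ (m : ℤ) := by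
      rw [mul_pow, zpow_natCast]
    apply le_of_eq
    rw [e1, e2]
    have : R ^ (-n : ℤ) * (((k + (p - 1)).choose (p - 1) : ℝ) * R ^ (-(k : ℤ)) *
        (|t| ^ m * R ^ (m : ℤ) / (m.factorial : ℝ)))
        = ((k + (p - 1)).choose (p - 1) : ℝ) * |t| ^ m / (m.factorial : ℝ) *
          (R ^ (-n : ℤ) * R ^ (-(k : ℤ)) * R ^ (m : ℤ)) := by ring
    rw [this, ← zpow_add₀ (ne_of_gt hR0), ← zpow_add₀ (ne_of_gt hR0),
      show (-n + -(k : ℤ) + m) = 0 by omega, zpow_zero, mul_one]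
  · rw [if_neg h, abs_zero]
    positivity

end Stmt9Aux

open Stmt9Aux in
/-- For an integer `p ≥ 1`, `n ∈ ℤ`, `t ∈ ℝ` and `R > 1`,
`(1/2πi) ∮_{|w|=R} e^{t(w−1)} (w−1)^{−p} w^{−(n−p+1)} dw
  = e^{−t} ∑_{k=0}^∞ binom(k+p−1, p−1) · t^{k+n}/(k+n)!`,
where terms with `k+n < 0` are `0`, and the series converges absolutely. -/
theorem stmt_9 (p : ℕ) (hp : 1 ≤ p) (n : ℤ) (t : ℝ) (R : ℝ) (hR : 1 < R) :
    Summable (fun k : ℕ =>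
      |if 0 ≤ (k : ℤ) + n then
          ((k + p - 1).choose (p - 1) : ℝ) * t ^ ((k : ℤ) + n).toNat /
            (((k : ℤ) + n).toNat.factorial : ℝ)
        else 0|) ∧
    (2 * Real.pi * Complex.I)⁻¹ *
        (∮ w in C(0, R),
          Complex.exp (t * (w - 1)) * (w - 1) ^ (-(p : ℤ)) * w ^ (-(n - (p : ℤ) + 1))) =
      Complex.ofReal (Real.exp (-t) *
        ∑' k : ℕ,
          if 0 ≤ (k : ℤ) + n then
            ((k + p - 1).choose (p - 1) : ℝ) * t ^ ((k : ℤ) + n).toNat /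
              (((k : ℤ) + n).toNat.factorial : ℝ)
          else 0) := by
  have hR0 : (0 : ℝ) < R := lt_trans one_pos hR
  refine ⟨summable_abs p hp n t hR, ?_⟩
  have h2πI : (2 * (Real.pi : ℂ) * Complex.I) ≠ 0 := by
    simp [Real.pi_ne_zero, Complex.I_ne_zero]
  rw [interchange p hp n t hR
    (fun w hw => (hasSum_FF p hp n t (by rw [hw]; exact hR)).tsum_eq)]
  rw [tsum_congr (fun q => integral_FF p n t hR0 q)]
  rw [diag_tsum p n t]
  have hterm : ∀ k : ℕ, (if 0 ≤ (k : ℤ) + n then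
      (2 * Real.pi * Complex.I) *
        (Complex.exp (-(t : ℂ)) * cc p t k ((k : ℤ) + n).toNat) else 0)
      = (2 * (Real.pi : ℂ) * Complex.I * Complex.exp (-(t : ℂ))) *
        Complex.ofReal (if 0 ≤ (k : ℤ) + n then
          ((k + p - 1).choose (p - 1) : ℝ) * t ^ ((k : ℤ) + n).toNat /
            (((k : ℤ) + n).toNat.factorial : ℝ) else 0) := by
    intro k
    by_cases h : 0 ≤ (k : ℤ) + n
    · rw [if_pos h, if_pos h, cc]
      have hch : (k + p - 1) = k + (p - 1) := by omega
      rw [hch]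
      push_cast
      ring
    · rw [if_neg h, if_neg h]
      simp
  rw [tsum_congr hterm, tsum_mul_left, ← Complex.ofReal_tsum]
  rw [show Complex.exp (-(t : ℂ)) = Complex.ofReal (Real.exp (-t)) by
    rw [Complex.ofReal_exp, Complex.ofReal_neg]]
  rw [Complex.ofReal_mul]
  field_simp
end

section
/- Let p ≤ 0 be an integer, n ∈ ℤ, t ∈ ℝ, and R > 0. Then (1/2πi) ∮_{|w|=R} e^{t(w−1)} (w−1)^{−p} w^{−(n−p+1)} dw = e^{−t} ∑_{k=0}^{−p} (−1)^k binom(−p, k) · t^{k+n}/(k+n)!, where terms with k + n < 0 are interpreted as 0. -/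
open Complex Metric

private lemma circleIntegrable_aux (a c : ℂ) (e : ℤ) {R : ℝ} (hR : 0 < R) :
    CircleIntegrable (fun w => a * (Complex.exp (c * w) * w ^ e)) 0 R := by
  refine ContinuousOn.circleIntegrable hR.le fun w hw => ?_
  have hw0 : w ≠ 0 := ne_of_mem_sphere hw hR.ne'
  exact (continuousAt_const.mul ((Complex.continuous_exp.continuousAt.comp
    (continuousAt_const.mul continuousAt_id)).mul
    (continuousAt_zpow₀ w e (Or.inl hw0)))).continuousWithinAt

private lemma circleIntegral_finset_sum {ι : Type*} (s : Finset ι) (f : ι → ℂ → ℂ) (c : ℂ) (R : ℝ)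
    (h : ∀ i ∈ s, CircleIntegrable (f i) c R) :
    (∮ w in C(c, R), ∑ i ∈ s, f i w) = ∑ i ∈ s, ∮ w in C(c, R), f i w := by
  simp only [circleIntegral]
  simp only [Finset.smul_sum]
  exact intervalIntegral.integral_finset_sum (fun i hi => (h i hi).out)

private lemma key_nonneg (c : ℂ) (j : ℕ) {R : ℝ} (hR : 0 < R) :
    (∮ w in C(0, R), Complex.exp (c * w) * w ^ (j : ℤ)) = 0 := by
  have : ∀ w : ℂ, Complex.exp (c * w) * w ^ (j : ℤ) = Complex.exp (c * w) * w ^ j := by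
    intro w; rw [zpow_natCast]
  simp only [this]
  refine circleIntegral_eq_zero_of_differentiable_on_off_countable hR.le Set.countable_empty
    (Continuous.continuousOn (by fun_prop)) fun z _ => ?_
  exact ((Complex.differentiable_exp.comp ((differentiable_const c).mul differentiable_id)).mul
    (differentiable_pow j)).differentiableAt

private lemma key_neg (c : ℂ) (j : ℕ) {R : ℝ} (hR : 0 < R) :
    (2 * Real.pi * Complex.I)⁻¹ *
      (∮ w in C(0, R), Complex.exp (c * w) * w ^ (-((j : ℤ) + 1))) =
    c ^ j / j.factorial := by
  set f : ℂ → ℂ := fun w => Complex.exp (c * w) with hf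
  have hd : Differentiable ℂ f :=
    Complex.differentiable_exp.comp ((differentiable_const c).mul differentiable_id)
  set q : FormalMultilinearSeries ℂ ℂ ℂ :=
    FormalMultilinearSeries.ofScalars ℂ (fun n => c ^ n / n.factorial) with hq
  have hqr : q.radius = ⊤ := by
    refine q.radius_eq_top_of_summable_norm fun r => ?_
    have : ∀ n : ℕ, ‖q n‖ * (r : ℝ) ^ n = (‖c‖ * r) ^ n / n.factorial := by
      intro n
      rw [hq, FormalMultilinearSeries.ofScalars_norm]
      simp [norm_div, norm_pow, mul_pow, div_mul_eq_mul_div]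
    simp only [this]
    exact Real.summable_pow_div_factorial _
  have h2 : HasFPowerSeriesOnBall f q 0 ⊤ := by
    refine ⟨le_of_eq hqr.symm, ENNReal.zero_lt_top, fun {y} _ => ?_⟩
    have := NormedSpace.expSeries_div_hasSum_exp (c * y)
    rw [← Complex.exp_eq_exp_ℂ] at this
    simp only [zero_add, hf]
    convert this using 1
    · rfl
    funext n
    rw [hq, FormalMultilinearSeries.ofScalars_apply_eq]
    rw [smul_eq_mul, mul_pow]
    ring
  set R' : NNReal := ⟨R, hR.le⟩ with hR'
  have h1 : HasFPowerSeriesOnBall f (cauchyPowerSeries f 0 R') 0 R' :=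
    hd.differentiableOn.hasFPowerSeriesOnBall (by exact_mod_cast hR)
  have hpq : cauchyPowerSeries f 0 R' = q :=
    h1.hasFPowerSeriesAt.eq_formalMultilinearSeries h2.hasFPowerSeriesAt
  have heval : (cauchyPowerSeries f 0 R' j fun _ => (1 : ℂ)) = c ^ j / j.factorial := by
    rw [hpq, hq, FormalMultilinearSeries.ofScalars_apply_eq]
    simp
  rw [cauchyPowerSeries_apply] at heval
  rw [← heval]
  have hcoe : (R' : ℝ) = R := rfl
  rw [hcoe]
  rw [smul_eq_mul]
  congr 1
  refine circleIntegral.integral_congr hR.le fun w hw => ?_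
  have hw0 : w ≠ 0 := ne_of_mem_sphere hw hR.ne'
  simp only [sub_zero, one_div, smul_eq_mul]
  rw [show (-((j : ℤ) + 1)) = -((j + 1 : ℕ) : ℤ) by push_cast; ring, zpow_neg, zpow_natCast,
    pow_succ, mul_inv, ← inv_pow]
  ring


/-- For an integer `p ≤ 0`, `n ∈ ℤ`, `t ∈ ℝ` and `R > 0`,
`(1/2πi) ∮_{|w|=R} e^{t(w−1)} (w−1)^{−p} w^{−(n−p+1)} dw
  = e^{−t} ∑_{k=0}^{−p} (−1)^k binom(−p, k) · t^{k+n}/(k+n)!`,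
where terms with `k+n < 0` are `0`. -/
theorem stmt_10 (p : ℤ) (hp : p ≤ 0) (n : ℤ) (t : ℝ) (R : ℝ) (hR : 0 < R) :
    (2 * Real.pi * Complex.I)⁻¹ *
        (∮ w in C(0, R),
          Complex.exp (t * (w - 1)) * (w - 1) ^ (-p) * w ^ (-(n - p + 1))) =
      Complex.ofReal (Real.exp (-t) *
        ∑ k ∈ Finset.range ((-p).toNat + 1),
          (-1 : ℝ) ^ k *
            ((-p).toNat.choose k : ℝ) *
            (if 0 ≤ (k : ℤ) + n then
              t ^ ((k : ℤ) + n).toNat / ((((k : ℤ) + n).toNat.factorial : ℝ))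
            else 0)) := by
  set m : ℕ := (-p).toNat with hm
  have hpm : -p = (m : ℤ) := (Int.toNat_of_nonneg (neg_nonneg.mpr hp)).symm
  have hEq : Set.EqOn (fun w => Complex.exp (↑t * (w - 1)) * (w - 1) ^ (-p) * w ^ (-(n - p + 1)))
      (fun w => ∑ k ∈ Finset.range (m + 1),
        (Complex.exp (-(t : ℂ)) * ((-1) ^ (k + m) * (m.choose k : ℂ))) *
          (Complex.exp (↑t * w) * w ^ ((k : ℤ) - (n - p + 1)))) (Metric.sphere 0 R) := by
    intro w hw
    have hw0 : w ≠ 0 := ne_of_mem_sphere hw hR.ne'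
    simp only
    rw [hpm, show ((t : ℂ) * (w - 1)) = (↑t * w + -↑t) by ring, Complex.exp_add,
      zpow_natCast, sub_pow, Finset.mul_sum, Finset.sum_mul]
    refine Finset.sum_congr rfl fun k hk => ?_
    rw [one_pow, sub_eq_add_neg ((k : ℤ)) (n - p + 1), zpow_add₀ hw0, zpow_natCast]
    ring
  rw [circleIntegral.integral_congr hR.le hEq,
    circleIntegral_finset_sum _ _ _ _ (fun k _ => circleIntegrable_aux _ _ _ hR),
    Finset.mul_sum]
  simp only [circleIntegral.integral_const_mul]
  have hterm : ∀ k ∈ Finset.range (m + 1),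
      (2 * (Real.pi : ℂ) * Complex.I)⁻¹ *
        ((Complex.exp (-(t : ℂ)) * ((-1) ^ (k + m) * (m.choose k : ℂ))) *
          ∮ w in C(0, R), Complex.exp (↑t * w) * w ^ ((k : ℤ) - (n - p + 1))) =
      Complex.exp (-(t : ℂ)) * ((-1) ^ (k + m) * (m.choose k : ℂ)) *
        (if (k : ℤ) ≤ n + m then
          (t : ℂ) ^ ((n + (m : ℤ) - k).toNat) / (((n + (m : ℤ) - k).toNat.factorial : ℂ))
        else 0) := by
    intro k _
    by_cases hk2 : (k : ℤ) ≤ n + m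
    · have hj : (k : ℤ) - (n - p + 1) = -(((n + (m : ℤ) - k).toNat : ℤ) + 1) := by omega
      rw [hj, if_pos hk2, mul_left_comm]
      congr 1
      exact key_neg (t : ℂ) _ hR
    · have hj : (k : ℤ) - (n - p + 1) = ((((k : ℤ) - (n - p + 1)).toNat : ℕ) : ℤ) := by omega
      rw [hj, key_nonneg (t : ℂ) _ hR, if_neg hk2]
      ring
  rw [Finset.sum_congr rfl hterm]
  -- now handle the RHS
  push_cast [Complex.ofReal_exp, apply_ite (fun x : ℝ => (x : ℂ))]
  rw [← Finset.sum_range_reflect (fun k => (-1 : ℂ) ^ k * (m.choose k : ℂ) *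
      (if 0 ≤ (k : ℤ) + n then
        (t : ℂ) ^ ((k : ℤ) + n).toNat / ((((k : ℤ) + n).toNat.factorial : ℂ)) else 0)) (m + 1)]
  rw [Finset.mul_sum]
  refine Finset.sum_congr rfl fun k hk => ?_
  have hkm : k ≤ m := Finset.mem_range_succ_iff.mp hk
  simp only [Nat.add_sub_cancel]
  have hsign : ((-1 : ℂ)) ^ (m - k) = (-1) ^ (k + m) := by
    have : k + m = (m - k) + 2 * k := by omega
    rw [this, pow_add, pow_mul]
    simp
  have hite : (if 0 ≤ ((m - k : ℕ) : ℤ) + n then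
        (t : ℂ) ^ (((m - k : ℕ) : ℤ) + n).toNat / (((((m - k : ℕ) : ℤ) + n).toNat.factorial : ℂ))
      else 0) =
      (if (k : ℤ) ≤ n + m then
        (t : ℂ) ^ ((n + (m : ℤ) - k).toNat) / (((n + (m : ℤ) - k).toNat.factorial : ℂ))
      else 0) := by
    have h1 : (((m - k : ℕ) : ℤ) + n).toNat = (n + (m : ℤ) - k).toNat := by omega
    have h2 : (0 ≤ ((m - k : ℕ) : ℤ) + n) ↔ ((k : ℤ) ≤ n + m) := by omega
    rw [h1]
    exact if_congr h2 rfl rfl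
  rw [hite, hsign, Nat.choose_symm hkm]
  ring
end

section
/- For p, n ∈ ℤ and t ∈ ℝ define F_p(n; t) = (1/2πi) ∮_{|w|=R} e^{t(w−1)} (w−1)^{−p} w^{−(n−p+1)} dw for any fixed R > 1 (the value is independent of such R). Then for every integer p ≤ −1, every n ∈ ℤ and every t ∈ ℝ, F_{p+1}(n; t) = − ∑_{m < n} F_p(m; t), where the sum over integers m < n has only finitely many nonzero terms (F_p(m; t) = 0 for m < p). -/
open Complex Metric

private lemma circleIntegral_add' {f g : ℂ → ℂ} {c : ℂ} {R : ℝ}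
    (hf : CircleIntegrable f c R) (hg : CircleIntegrable g c R) :
    (∮ z in C(c, R), (f z + g z)) = (∮ z in C(c, R), f z) + ∮ z in C(c, R), g z := by
  simp only [circleIntegral, smul_add]
  exact intervalIntegral.integral_add hf.out hg.out

private lemma circleIntegral_sum' {ι : Type*} (s : Finset ι) {f : ι → ℂ → ℂ} {c : ℂ} {R : ℝ}
    (h : ∀ i ∈ s, CircleIntegrable (f i) c R) :
    (∮ z in C(c, R), ∑ i ∈ s, f i z) = ∑ i ∈ s, ∮ z in C(c, R), f i z := by
  simp only [circleIntegral, Finset.smul_sum]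
  exact intervalIntegral.integral_finset_sum fun i hi => (h i hi).out

private lemma entire_circleIntegral_zero (t : ℝ) (a b : ℕ) :
    (∮ w in C((0:ℂ), 2), Complex.exp (t * (w - 1)) * (w - 1) ^ a * w ^ b) = 0 := by
  have hd : Differentiable ℂ fun w : ℂ => Complex.exp (t * (w - 1)) * (w - 1) ^ a * w ^ b := by
    fun_prop
  exact circleIntegral_eq_zero_of_differentiable_on_off_countable (by norm_num)
    Set.countable_empty hd.continuous.continuousOn (fun z _ => hd z)

private lemma integrand_circleIntegrable (t : ℝ) (a b : ℤ) :
    CircleIntegrable (fun w : ℂ => Complex.exp (t * (w - 1)) * (w - 1) ^ a * w ^ b) 0 2 := by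
  apply ContinuousOn.circleIntegrable (by norm_num)
  intro w hw
  rw [mem_sphere_zero_iff_norm] at hw
  have hw0 : w ≠ 0 := by intro h; rw [h] at hw; simp at hw
  have hw1 : w - 1 ≠ 0 := by
    intro h
    rw [sub_eq_zero] at h
    rw [h] at hw
    simp at hw
  have h1 : ContinuousAt (fun w : ℂ => Complex.exp (t * (w - 1))) w := by fun_prop
  have h2 : ContinuousAt (fun w : ℂ => (w - 1) ^ a) w :=
    (continuousAt_id.sub continuousAt_const).zpow₀ a (Or.inl hw1)
  have h3 : ContinuousAt (fun w : ℂ => w ^ b) w := continuousAt_zpow₀ w b (Or.inl hw0)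
  exact ((h1.mul h2).mul h3).continuousWithinAt

private lemma geom_aux (w : ℂ) (hw : w ≠ 0) (p : ℤ) (K : ℕ) :
    (w - 1) * ∑ m ∈ Finset.Ico p (p + K), w ^ (-(m - p + 1)) = 1 - w⁻¹ ^ K := by
  induction K with
  | zero => simp
  | succ K ih =>
    have h1 : p + ((K : ℕ) + 1 : ℕ) = (p + K) + 1 := by push_cast; ring
    have hins : Finset.Ico p ((p + (K : ℤ)) + 1) = insert (p + (K : ℤ)) (Finset.Ico p (p + (K : ℤ))) := by
      ext x; simp only [Finset.mem_Ico, Finset.mem_insert]; omega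
    rw [h1, hins, Finset.sum_insert (by simp [Finset.mem_Ico]), mul_add, add_comm, ih]
    have he : (-(p + (K : ℤ) - p + 1)) = -((K : ℤ) + 1) := by ring
    rw [he]
    have hz : w ^ (-((K : ℤ) + 1)) = w⁻¹ ^ (K + 1) := by
      rw [zpow_neg, inv_pow]
      norm_cast
    rw [hz]
    have hwk : w * w⁻¹ ^ (K + 1) = w⁻¹ ^ K := by
      rw [pow_succ, ← mul_assoc, mul_comm w, mul_assoc, mul_inv_cancel₀ hw, mul_one]
    linear_combination hwk

/-- Let `F p n` (for fixed `t ∈ ℝ`) be given by the contour integral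
`F_p(n; t) = (1/2πi) ∮_{|w|=R} e^{t(w−1)} (w−1)^{−p} w^{−(n−p+1)} dw` for every `R > 1`
(the value being independent of such `R`). Then for every integer `p ≤ −1`, every `n ∈ ℤ`
and every `t`, `F_p(m; t) = 0` for `m < p` (so the sum below has finitely many nonzero
terms) and `F_{p+1}(n; t) = − ∑_{m < n} F_p(m; t)`. -/
theorem stmt_12 (t : ℝ) (F : ℤ → ℤ → ℂ)
    (hF : ∀ p n : ℤ, ∀ R : ℝ, 1 < R →
      F p n = (2 * Real.pi * Complex.I)⁻¹ *
        ∮ w in C(0, R), Complex.exp (t * (w - 1)) * (w - 1) ^ (-p) * w ^ (-(n - p + 1)))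
    (p : ℤ) (hp : p ≤ -1) (n : ℤ) :
    (∀ m : ℤ, m < p → F p m = 0) ∧
      F (p + 1) n = - ∑' m : {m : ℤ // m < n}, F p (m : ℤ) := by
  have hzero : ∀ q m : ℤ, 0 ≤ -q → 0 ≤ q - m - 1 → F q m = 0 := by
    intro q m h1 h2
    rw [hF q m 2 one_lt_two]
    obtain ⟨a, ha⟩ := Int.eq_ofNat_of_zero_le h1
    obtain ⟨b, hb⟩ := Int.eq_ofNat_of_zero_le (show (0:ℤ) ≤ -(m - q + 1) by omega)
    rw [ha, hb]
    simp only [zpow_natCast]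
    rw [entire_circleIntegral_zero, mul_zero]
  refine ⟨fun m hm => hzero p m (by omega) (by omega), ?_⟩
  have hts : (∑' m : {m : ℤ // m < n}, F p (m : ℤ)) = ∑ m ∈ Finset.Ico p n, F p m := by
    have h1 : (∑' m : {m : ℤ // m < n}, F p (m : ℤ))
        = ∑' m : ℤ, Set.indicator {m : ℤ | m < n} (F p) m := tsum_subtype {m : ℤ | m < n} (F p)
    have h2 : ∀ m ∉ Finset.Ico p n, Set.indicator {m : ℤ | m < n} (F p) m = 0 := by
      intro m hm
      rw [Finset.mem_Ico] at hm
      by_cases h : m < n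
      · rw [Set.indicator_of_mem (show m ∈ {m : ℤ | m < n} from h) (F p)]
        exact hzero p m (by omega) (by omega)
      · exact Set.indicator_of_notMem (show m ∉ {m : ℤ | m < n} from h) (F p)
    rw [h1, tsum_eq_sum h2]
    refine Finset.sum_congr rfl fun m hm => ?_
    rw [Finset.mem_Ico] at hm
    exact Set.indicator_of_mem (show m ∈ {m : ℤ | m < n} from hm.2) (F p)
  rw [hts]
  rcases le_or_gt n p with hn | hn
  · rw [Finset.Ico_eq_empty (by omega), Finset.sum_empty, neg_zero]
    exact hzero (p + 1) n (by omega) (by omega)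
  · obtain ⟨K, hnK⟩ : ∃ K : ℕ, n = p + K := ⟨(n - p).toNat, by omega⟩
    subst hnK
    set A : ℕ := (-(p + 1)).toNat with hAdef
    have hA : -(p + 1) = (A : ℤ) := by omega
    have hp' : -p = (A : ℤ) + 1 := by omega
    -- the key pointwise identity on the circle
    have key : Set.EqOn
        (fun w : ℂ => (Complex.exp (t * (w - 1)) * (w - 1) ^ (-(p + 1)) *
            w ^ (-(p + (K : ℤ) - (p + 1) + 1)) +
          ∑ m ∈ Finset.Ico p (p + (K : ℤ)),
            Complex.exp (t * (w - 1)) * (w - 1) ^ (-p) * w ^ (-(m - p + 1))))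
        (fun w : ℂ => Complex.exp (t * (w - 1)) * (w - 1) ^ A * w ^ (0 : ℕ))
        (sphere (0 : ℂ) 2) := by
      intro w hw
      rw [mem_sphere_zero_iff_norm] at hw
      have hw0 : w ≠ 0 := by intro h; rw [h] at hw; simp at hw
      have hw1 : w - 1 ≠ 0 := by
        intro h
        rw [sub_eq_zero] at h
        rw [h] at hw
        simp at hw
      have e1 : (-(p + (K : ℤ) - (p + 1) + 1)) = -(K : ℤ) := by ring
      have e2 : w ^ (-(K : ℤ)) = w⁻¹ ^ K := by rw [zpow_neg, inv_pow]; norm_cast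
      have e3 : (w - 1) ^ ((A : ℤ) + 1) = (w - 1) ^ A * (w - 1) := by
        rw [zpow_add_one₀ hw1, zpow_natCast]
      have hgeom := geom_aux w hw0 p K
      simp only [e1, hA, hp', e2, e3, zpow_natCast, pow_zero, mul_one]
      rw [← Finset.mul_sum]
      linear_combination (Complex.exp (t * (w - 1)) * (w - 1) ^ A) * hgeom
    have hint : ∀ m : ℤ, CircleIntegrable
        (fun w : ℂ => Complex.exp (t * (w - 1)) * (w - 1) ^ (-p) * w ^ (-(m - p + 1))) 0 2 :=
      fun m => integrand_circleIntegrable t (-p) (-(m - p + 1))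
    have hint2 : CircleIntegrable
        (fun w : ℂ => Complex.exp (t * (w - 1)) * (w - 1) ^ (-(p + 1)) *
          w ^ (-(p + (K : ℤ) - (p + 1) + 1))) 0 2 :=
      integrand_circleIntegrable t (-(p + 1)) (-(p + (K : ℤ) - (p + 1) + 1))
    have hintsum : CircleIntegrable
        (fun w : ℂ => ∑ m ∈ Finset.Ico p (p + (K : ℤ)),
          Complex.exp (t * (w - 1)) * (w - 1) ^ (-p) * w ^ (-(m - p + 1))) 0 2 := by
      have : (fun w : ℂ => ∑ m ∈ Finset.Ico p (p + (K : ℤ)),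
          Complex.exp (t * (w - 1)) * (w - 1) ^ (-p) * w ^ (-(m - p + 1)))
          = ∑ m ∈ Finset.Ico p (p + (K : ℤ)),
            fun w : ℂ => Complex.exp (t * (w - 1)) * (w - 1) ^ (-p) * w ^ (-(m - p + 1)) := by
        ext w; simp
      rw [this]
      exact Finset.sum_induction _ (fun g => CircleIntegrable g 0 2)
        (fun f g hf hg => hf.add hg) (circleIntegrable_const (0 : ℂ) (0 : ℂ) 2)
        (fun m _ => hint m)
    have hcombined :
        (∮ w in C((0:ℂ), 2), (Complex.exp (t * (w - 1)) * (w - 1) ^ (-(p + 1)) *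
            w ^ (-(p + (K : ℤ) - (p + 1) + 1)) +
          ∑ m ∈ Finset.Ico p (p + (K : ℤ)),
            Complex.exp (t * (w - 1)) * (w - 1) ^ (-p) * w ^ (-(m - p + 1)))) = 0 := by
      rw [circleIntegral.integral_congr (by norm_num) key]
      exact entire_circleIntegral_zero t A 0
    rw [circleIntegral_add' hint2 hintsum, circleIntegral_sum' _ (fun m _ => hint m)]
      at hcombined
    rw [hF (p + 1) (p + K) 2 one_lt_two]
    have hsum : ∑ m ∈ Finset.Ico p (p + (K : ℤ)), F p m
        = (2 * Real.pi * Complex.I)⁻¹ * ∑ m ∈ Finset.Ico p (p + (K : ℤ)),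
            ∮ w in C((0:ℂ), 2),
              Complex.exp (t * (w - 1)) * (w - 1) ^ (-p) * w ^ (-(m - p + 1)) := by
      rw [Finset.mul_sum]
      exact Finset.sum_congr rfl fun m _ => hF p m 2 one_lt_two
    rw [hsum]
    have : (∮ w in C((0:ℂ), 2), Complex.exp (t * (w - 1)) * (w - 1) ^ (-(p + 1)) *
          w ^ (-(p + (K : ℤ) - (p + 1) + 1)))
        = -∑ m ∈ Finset.Ico p (p + (K : ℤ)),
            ∮ w in C((0:ℂ), 2),
              Complex.exp (t * (w - 1)) * (w - 1) ^ (-p) * w ^ (-(m - p + 1)) := by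
      linear_combination hcombined
    rw [this]
    ring
end

section
/- Let t > 0, let q ≥ 1 be an integer and n ∈ ℤ. For integers M ≥ 2 define S_M = (1 − 1/M)^{⌊Mt⌋} · ∑_{l=0}^{∞} binom(l+q−1, q−1) · b(⌊Mt⌋, n+l) · (M−1)^{−(n+l)}, where b(K, m) = binom(K, m) if 0 ≤ m ≤ K and b(K, m) = 0 otherwise (so for each M only finitely many terms are nonzero). Then the series ∑_{l=0}^{∞} binom(l+q−1, q−1) · τ_t(n+l) converges, where τ_t(m) = t^m/m! for m ≥ 0 and τ_t(m) = 0 for m < 0, and lim_{M→∞} S_M = e^{−t} ∑_{l=0}^{∞} binom(l+q−1, q−1) · τ_t(n+l). -/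
open Filter Topology

/-- `b(K, m) = binom(K, m)` if `0 ≤ m ≤ K`, else `0` (for `K : ℕ`, `m : ℤ`). -/
noncomputable def binomExt (K : ℕ) (m : ℤ) : ℝ :=
  if 0 ≤ m ∧ m ≤ K then (K.choose m.toNat : ℝ) else 0

/-- `τ_t(m) = t^m / m!` for `m ≥ 0` and `0` for `m < 0`. -/
noncomputable def poissonWeight (t : ℝ) (m : ℤ) : ℝ :=
  if 0 ≤ m then t ^ m.toNat / (m.toNat.factorial : ℝ) else 0

lemma st14_pw_nonneg {u : ℝ} (hu : 0 ≤ u) (m : ℤ) : 0 ≤ poissonWeight u m := by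
  rw [poissonWeight]
  split
  · positivity
  · exact le_refl 0

lemma st14_choose_le_two_pow (n k : ℕ) : n.choose k ≤ 2 ^ n := by
  rcases le_or_gt k n with h | h
  · calc n.choose k ≤ ∑ m ∈ Finset.range (n + 1), n.choose m :=
        Finset.single_le_sum (fun i _ => Nat.zero_le _) (Finset.mem_range.2 (by omega))
    _ = 2 ^ n := Nat.sum_range_choose n
  · simp [Nat.choose_eq_zero_of_lt h]

lemma st14_div_tendsto (t a d : ℝ) :
    Tendsto (fun M : ℕ => ((M : ℝ) * t - a) / ((M : ℝ) - d)) atTop (𝓝 t) := by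
  have h1 : Tendsto (fun M : ℕ => (t - a / (M : ℝ)) / (1 - d / (M : ℝ))) atTop (𝓝 t) := by
    have hnum : Tendsto (fun M : ℕ => t - a / (M : ℝ)) atTop (𝓝 (t - 0)) :=
      tendsto_const_nhds.sub (tendsto_const_div_atTop_nhds_zero_nat a)
    have hden : Tendsto (fun M : ℕ => 1 - d / (M : ℝ)) atTop (𝓝 (1 - 0)) :=
      tendsto_const_nhds.sub (tendsto_const_div_atTop_nhds_zero_nat d)
    have h := hnum.div hden (by norm_num)
    rw [sub_zero, sub_zero, div_one] at h
    exact h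
  refine h1.congr' ?_
  filter_upwards [eventually_ge_atTop 1,
    tendsto_natCast_atTop_atTop.eventually_gt_atTop d] with M hM1 hMd
  have hM0 : (M : ℝ) ≠ 0 := by
    have : (1 : ℝ) ≤ (M : ℝ) := by exact_mod_cast hM1
    linarith
  have hMd' : (M : ℝ) - d ≠ 0 := by linarith
  field_simp

lemma st14_floor_tendsto (t : ℝ) (ht : 0 < t) (c d : ℝ) :
    Tendsto (fun M : ℕ => ((⌊(M : ℝ) * t⌋.toNat : ℝ) - c) / ((M : ℝ) - d)) atTop (𝓝 t) := by
  refine tendsto_of_tendsto_of_tendsto_of_le_of_le' (st14_div_tendsto t (1 + c) d)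
    (st14_div_tendsto t c d) ?_ ?_
  · filter_upwards [tendsto_natCast_atTop_atTop.eventually_gt_atTop d] with M hMd
    have hpos : (0 : ℝ) < (M : ℝ) - d := by linarith
    have hfl : ((⌊(M : ℝ) * t⌋.toNat : ℝ)) = ((⌊(M : ℝ) * t⌋ : ℤ) : ℝ) := by
      have h := Int.toNat_of_nonneg (Int.floor_nonneg.2 (show (0:ℝ) ≤ (M : ℝ) * t by positivity))
      exact_mod_cast congrArg (fun z : ℤ => (z : ℝ)) h
    have h2 : (M : ℝ) * t - 1 ≤ ((⌊(M : ℝ) * t⌋ : ℤ) : ℝ) := by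
      have := Int.sub_one_lt_floor ((M : ℝ) * t)
      linarith
    rw [hfl]
    exact (div_le_div_iff_of_pos_right hpos).mpr (by linarith)
  · filter_upwards [tendsto_natCast_atTop_atTop.eventually_gt_atTop d] with M hMd
    have hpos : (0 : ℝ) < (M : ℝ) - d := by linarith
    have hfl : ((⌊(M : ℝ) * t⌋.toNat : ℝ)) = ((⌊(M : ℝ) * t⌋ : ℤ) : ℝ) := by
      have h := Int.toNat_of_nonneg (Int.floor_nonneg.2 (show (0:ℝ) ≤ (M : ℝ) * t by positivity))
      exact_mod_cast congrArg (fun z : ℤ => (z : ℝ)) h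
    have h2 : ((⌊(M : ℝ) * t⌋ : ℤ) : ℝ) ≤ (M : ℝ) * t := Int.floor_le _
    rw [hfl]
    exact (div_le_div_iff_of_pos_right hpos).mpr (by linarith)

lemma st14_prefactor (t : ℝ) (ht : 0 < t) :
    Tendsto (fun M : ℕ => (1 - 1 / (M : ℝ)) ^ (⌊(M : ℝ) * t⌋.toNat)) atTop
      (𝓝 (Real.exp (-t))) := by
  have hlog : Tendsto (fun M : ℕ => (M : ℝ) * Real.log (1 + (-1) / (M : ℝ))) atTop (𝓝 (-1)) :=
    (Real.tendsto_mul_log_one_add_div_atTop (-1)).comp tendsto_natCast_atTop_atTop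
  have hK : Tendsto (fun M : ℕ => ((⌊(M : ℝ) * t⌋.toNat : ℝ)) / (M : ℝ)) atTop (𝓝 t) := by
    simpa using st14_floor_tendsto t ht 0 0
  have hmul :
      Tendsto (fun M : ℕ =>
        (((⌊(M : ℝ) * t⌋.toNat : ℝ)) / (M : ℝ)) * ((M : ℝ) * Real.log (1 + (-1) / (M : ℝ))))
        atTop (𝓝 (t * (-1))) := hK.mul hlog
  have hexp := (Real.continuous_exp.tendsto (t * (-1))).comp hmul
  rw [show t * (-1) = -t by ring] at hexp
  refine hexp.congr' ?_
  filter_upwards [eventually_ge_atTop 2] with M hM2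
  have hM : (2 : ℝ) ≤ (M : ℝ) := by exact_mod_cast hM2
  have hM0 : (M : ℝ) ≠ 0 := by linarith
  have hpos : (0 : ℝ) < 1 - 1 / (M : ℝ) := by
    have : 1 / (M : ℝ) ≤ 1 / 2 := one_div_le_one_div_of_le (by norm_num) hM
    linarith
  set K := ⌊(M : ℝ) * t⌋.toNat
  have h1 : (1 : ℝ) + (-1) / (M : ℝ) = 1 - 1 / (M : ℝ) := by ring
  have h2 : ((K : ℝ) / (M : ℝ)) * ((M : ℝ) * Real.log (1 - 1 / (M : ℝ)))
      = (K : ℝ) * Real.log (1 - 1 / (M : ℝ)) := by field_simp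
  rw [Function.comp_apply, h1, h2, Real.exp_nat_mul, Real.exp_log hpos]

lemma st14_pointwise (t : ℝ) (ht : 0 < t) (m : ℤ) :
    Tendsto (fun M : ℕ => binomExt ⌊(M : ℝ) * t⌋.toNat m * ((M : ℝ) - 1) ^ (-m)) atTop
      (𝓝 (poissonWeight t m)) := by
  by_cases hm : 0 ≤ m
  · set s := m.toNat with hs
    have hms : ((s : ℤ)) = m := Int.toNat_of_nonneg hm
    have hprod :
        Tendsto (fun M : ℕ =>
            (1 / (s.factorial : ℝ)) *
              ∏ i ∈ Finset.range s, (((⌊(M : ℝ) * t⌋.toNat : ℝ) - i) / ((M : ℝ) - 1)))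
          atTop (𝓝 ((1 / (s.factorial : ℝ)) * t ^ s)) := by
      have h := tendsto_finset_prod (f := fun (i : ℕ) (M : ℕ) =>
          ((⌊(M : ℝ) * t⌋.toNat : ℝ) - (i : ℝ)) / ((M : ℝ) - 1))
          (Finset.range s) (fun i _ => st14_floor_tendsto t ht i 1)
      simpa using h.const_mul (1 / (s.factorial : ℝ))
    have hKtop : Tendsto (fun M : ℕ => ⌊(M : ℝ) * t⌋.toNat) atTop atTop := by
      have h1 : Tendsto (fun M : ℕ => (M : ℝ) * t) atTop atTop :=
        Tendsto.atTop_mul_const ht tendsto_natCast_atTop_atTop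
      have := (tendsto_nat_floor_atTop (α := ℝ)).comp h1
      simpa [Int.floor_toNat, Function.comp_def] using this
    have heq : poissonWeight t m = (1 / (s.factorial : ℝ)) * t ^ s := by
      rw [poissonWeight, if_pos hm]; ring
    rw [heq]
    refine hprod.congr' ?_
    filter_upwards [hKtop.eventually_ge_atTop s, eventually_ge_atTop 2] with M hKs hM2
    set K := ⌊(M : ℝ) * t⌋.toNat with hK
    have hM : (2 : ℝ) ≤ (M : ℝ) := by exact_mod_cast hM2
    have hMne : ((M : ℝ) - 1) ≠ 0 := by linarith
    have hb : binomExt K m = (K.choose s : ℝ) := by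
      rw [binomExt, if_pos ⟨hm, by rw [← hms]; exact_mod_cast hKs⟩]
    have hz : ((M : ℝ) - 1) ^ (-m) = (((M : ℝ) - 1) ^ s)⁻¹ := by
      rw [← hms, zpow_neg, zpow_natCast]
    have hdesc : (K.descFactorial s : ℝ) = ∏ i ∈ Finset.range s, ((K : ℝ) - i) := by
      rw [Nat.descFactorial_eq_prod_range, Nat.cast_prod]
      refine Finset.prod_congr rfl fun i hi => ?_
      have hi' := Finset.mem_range.1 hi
      have : i ≤ K := by omega
      push_cast [Nat.cast_sub this]
      ring
    have hchoose : (K.choose s : ℝ)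
        = (∏ i ∈ Finset.range s, ((K : ℝ) - i)) / (s.factorial : ℝ) := by
      rw [← hdesc, eq_div_iff (by positivity)]
      exact_mod_cast congrArg (Nat.cast (R := ℝ))
        ((Nat.mul_comm _ _).trans (Nat.descFactorial_eq_factorial_mul_choose K s).symm)
    rw [hb, hz, hchoose, Finset.prod_div_distrib, Finset.prod_const, Finset.card_range]
    field_simp
  · have h0 : poissonWeight t m = 0 := by rw [poissonWeight, if_neg hm]
    have hb : ∀ M : ℕ, binomExt ⌊(M : ℝ) * t⌋.toNat m = 0 := fun M => by
      rw [binomExt, if_neg (by tauto)]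
    rw [h0]
    refine tendsto_const_nhds.congr fun M => ?_
    rw [hb M, zero_mul]

lemma st14_summable (u : ℝ) (hu : 0 < u) (q : ℕ) (n : ℤ) :
    Summable (fun l : ℕ => ((l + q - 1).choose (q - 1) : ℝ) * poissonWeight u (n + l)) := by
  set B := max u 1 with hB
  have hB1 : (1 : ℝ) ≤ B := le_max_right _ _
  have hub : u ≤ B := le_max_left _ _
  have hB0 : (0 : ℝ) < B := lt_of_lt_of_le one_pos hB1
  set l0 := (-n).toNat with hl0
  set C : ℝ := 2 ^ q * B ^ n.toNat with hC
  have hC0 : 0 < C := by positivity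
  set F : ℕ → ℝ := fun l => C * (2 * B) ^ l / ((l - l0).factorial : ℝ) with hF
  have hFs : Summable F := by
    rw [← summable_nat_add_iff l0]
    have heq : (fun l : ℕ => F (l + l0))
        = fun l => (C * (2 * B) ^ l0) * ((2 * B) ^ l / (l.factorial : ℝ)) := by
      funext l
      simp only [hF, Nat.add_sub_cancel]
      rw [pow_add]
      ring
    rw [heq]
    exact (Real.summable_pow_div_factorial (2 * B)).mul_left _
  refine Summable.of_norm_bounded_eventually_nat hFs ?_
  filter_upwards [eventually_ge_atTop l0] with l hl
  by_cases hm : 0 ≤ n + (l : ℤ)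
  · set s := (n + (l : ℤ)).toNat with hs
    have hpw : poissonWeight u (n + l) = u ^ s / (s.factorial : ℝ) := by
      rw [poissonWeight, if_pos hm]
    have hnn : 0 ≤ ((l + q - 1).choose (q - 1) : ℝ) * poissonWeight u (n + l) := by
      rw [hpw]; positivity
    rw [Real.norm_eq_abs, abs_of_nonneg hnn, hpw]
    have hs1 : s ≤ n.toNat + l := by omega
    have hs2 : l - l0 ≤ s := by omega
    have hch : ((l + q - 1).choose (q - 1) : ℝ) ≤ 2 ^ q * 2 ^ l := by
      have h1 : (l + q - 1).choose (q - 1) ≤ 2 ^ (l + q - 1) := st14_choose_le_two_pow _ _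
      have h2 : (2 : ℕ) ^ (l + q - 1) ≤ 2 ^ (q + l) := Nat.pow_le_pow_right (by norm_num) (by omega)
      calc ((l + q - 1).choose (q - 1) : ℝ) ≤ ((2 ^ (q + l) : ℕ) : ℝ) := by
            exact_mod_cast h1.trans h2
        _ = 2 ^ q * 2 ^ l := by push_cast [pow_add]; ring
    have hun : u ^ s ≤ B ^ n.toNat * B ^ l := by
      calc u ^ s ≤ B ^ s := pow_le_pow_left₀ hu.le hub s
        _ ≤ B ^ (n.toNat + l) := pow_le_pow_right₀ hB1 hs1
        _ = B ^ n.toNat * B ^ l := pow_add _ _ _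
    have hfac : (((l - l0).factorial : ℕ) : ℝ) ≤ ((s.factorial : ℕ) : ℝ) := by
      exact_mod_cast Nat.factorial_le hs2
    have hdiv : u ^ s / (s.factorial : ℝ)
        ≤ (B ^ n.toNat * B ^ l) / ((l - l0).factorial : ℝ) :=
      div_le_div₀ (by positivity) hun (by positivity) hfac
    calc ((l + q - 1).choose (q - 1) : ℝ) * (u ^ s / (s.factorial : ℝ))
        ≤ (2 ^ q * 2 ^ l) * ((B ^ n.toNat * B ^ l) / ((l - l0).factorial : ℝ)) :=
          mul_le_mul hch hdiv (by positivity) (by positivity)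
      _ = F l := by
          simp only [hF, hC, mul_pow]
          ring
  · have hpw : poissonWeight u (n + l) = 0 := by rw [poissonWeight, if_neg hm]
    rw [hpw, mul_zero, norm_zero]
    positivity

/-- For `t > 0`, integer `q ≥ 1`, `n ∈ ℤ`, with
`S_M = (1−1/M)^⌊Mt⌋ · ∑_{l=0}^∞ binom(l+q−1, q−1) · b(⌊Mt⌋, n+l) · (M−1)^{−(n+l)}`,
the series `∑_{l≥0} binom(l+q−1, q−1) · τ_t(n+l)` converges and
`lim_{M→∞} S_M = e^{−t} ∑_{l=0}^∞ binom(l+q−1, q−1) · τ_t(n+l)`. -/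
theorem stmt_14 (t : ℝ) (ht : 0 < t) (q : ℕ) (hq : 1 ≤ q) (n : ℤ) :
    Summable (fun l : ℕ => ((l + q - 1).choose (q - 1) : ℝ) * poissonWeight t (n + l)) ∧
    Tendsto
      (fun M : ℕ =>
        (1 - 1 / (M : ℝ)) ^ (⌊(M : ℝ) * t⌋.toNat) *
          ∑' l : ℕ,
            ((l + q - 1).choose (q - 1) : ℝ) * binomExt ⌊(M : ℝ) * t⌋.toNat (n + l) *
              ((M : ℝ) - 1) ^ (-(n + (l : ℤ))))
      atTop
      (𝓝 (Real.exp (-t) *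
        ∑' l : ℕ, ((l + q - 1).choose (q - 1) : ℝ) * poissonWeight t (n + l))) := by
  refine ⟨st14_summable t ht q n, ?_⟩
  have htsum : Tendsto
      (fun M : ℕ => ∑' l : ℕ,
        ((l + q - 1).choose (q - 1) : ℝ) * binomExt ⌊(M : ℝ) * t⌋.toNat (n + l) *
          ((M : ℝ) - 1) ^ (-(n + (l : ℤ))))
      atTop (𝓝 (∑' l : ℕ, ((l + q - 1).choose (q - 1) : ℝ) * poissonWeight t (n + l))) := by
    refine tendsto_tsum_of_dominated_convergence
      (bound := fun l : ℕ => ((l + q - 1).choose (q - 1) : ℝ) * poissonWeight (2 * t) (n + l))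
      (st14_summable (2 * t) (by linarith) q n) (fun l => ?_) ?_
    · have := (st14_pointwise t ht (n + l)).const_mul (((l + q - 1).choose (q - 1) : ℝ))
      simpa [mul_assoc] using this
    · filter_upwards [eventually_ge_atTop 2] with M hM2
      intro l
      have hM : (2 : ℝ) ≤ (M : ℝ) := by exact_mod_cast hM2
      have hM1 : (1 : ℝ) ≤ (M : ℝ) - 1 := by linarith
      set K := ⌊(M : ℝ) * t⌋.toNat with hKdef
      by_cases h1 : 0 ≤ n + (l : ℤ) ∧ n + (l : ℤ) ≤ (K : ℤ)
      · set s := (n + (l : ℤ)).toNat with hs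
        have hms : ((s : ℤ)) = n + (l : ℤ) := Int.toNat_of_nonneg h1.1
        have hb : binomExt K (n + l) = (K.choose s : ℝ) := by rw [binomExt, if_pos h1]
        have hz : ((M : ℝ) - 1) ^ (-(n + (l : ℤ))) = (((M : ℝ) - 1) ^ s)⁻¹ := by
          rw [← hms, zpow_neg, zpow_natCast]
        have hpw : poissonWeight (2 * t) (n + l) = (2 * t) ^ s / (s.factorial : ℝ) := by
          rw [poissonWeight, if_pos h1.1]
        have hKle : (K : ℝ) ≤ (M : ℝ) * t := by
          have hfl : ((K : ℝ)) = ((⌊(M : ℝ) * t⌋ : ℤ) : ℝ) := by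
            have h := Int.toNat_of_nonneg (Int.floor_nonneg.2
              (show (0:ℝ) ≤ (M : ℝ) * t by positivity))
            rw [hKdef]
            exact_mod_cast congrArg (fun z : ℤ => (z : ℝ)) h
          rw [hfl]; exact Int.floor_le _
        have hch : (K.choose s : ℝ) ≤ (K : ℝ) ^ s / (s.factorial : ℝ) := by
          rw [le_div_iff₀ (by positivity)]
          have hnat : s.factorial * K.choose s ≤ K ^ s := by
            rw [← Nat.descFactorial_eq_factorial_mul_choose]
            exact Nat.descFactorial_le_pow K s
          calc (K.choose s : ℝ) * (s.factorial : ℝ)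
              = ((s.factorial * K.choose s : ℕ) : ℝ) := by push_cast; ring
            _ ≤ ((K ^ s : ℕ) : ℝ) := by exact_mod_cast hnat
            _ = (K : ℝ) ^ s := by push_cast; ring
        have hratio : (K : ℝ) ^ s / ((M : ℝ) - 1) ^ s ≤ (2 * t) ^ s := by
          rw [← div_pow]
          refine pow_le_pow_left₀ (by positivity) ?_ s
          rw [div_le_iff₀ (by linarith)]
          calc (K : ℝ) ≤ (M : ℝ) * t := hKle
            _ ≤ 2 * t * ((M : ℝ) - 1) := by nlinarith
        have hkey : (K.choose s : ℝ) * (((M : ℝ) - 1) ^ s)⁻¹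
            ≤ (2 * t) ^ s / (s.factorial : ℝ) := by
          have step1 : (K.choose s : ℝ) * (((M : ℝ) - 1) ^ s)⁻¹
              ≤ ((K : ℝ) ^ s / (s.factorial : ℝ)) * (((M : ℝ) - 1) ^ s)⁻¹ :=
            mul_le_mul_of_nonneg_right hch (by positivity)
          have step2 : ((K : ℝ) ^ s / (s.factorial : ℝ)) * (((M : ℝ) - 1) ^ s)⁻¹
              = ((K : ℝ) ^ s / ((M : ℝ) - 1) ^ s) / (s.factorial : ℝ) := by ring
          have step3 : ((K : ℝ) ^ s / ((M : ℝ) - 1) ^ s) / (s.factorial : ℝ)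
              ≤ (2 * t) ^ s / (s.factorial : ℝ) := by gcongr
          linarith [step2 ▸ step1]
        rw [hb, hz, hpw, Real.norm_eq_abs, abs_of_nonneg (by positivity), mul_assoc]
        exact mul_le_mul_of_nonneg_left hkey (by positivity)
      · have hb : binomExt K (n + l) = 0 := by rw [binomExt, if_neg h1]
        rw [hb, mul_zero, zero_mul, norm_zero]
        exact mul_nonneg (by positivity) (st14_pw_nonneg (by linarith) _)
  exact (st14_prefactor t ht).mul htsum
end

section
/- Let N ≥ 1 be an integer, t > 0, and let x_1, …, x_N ∈ ℤ. For integers M ≥ 2 define the N × N real matrix A_M by A_M(i, j) = (1 − 1/M)^{⌊Mt⌋} · (M−1)^{−(x_i − i)} · V_M(i, j), where V_M(i, j) = ∑_{l=0}^{i−j} (−1)^l binom(i−j, l) · b(⌊Mt⌋, x_i − i + l) · (M−1)^{−l} if j ≤ i, and V_M(i, j) = ∑_{l=0}^{∞} binom(l + j − i − 1, j − i − 1) · b(⌊Mt⌋, x_i − i + l) · (M−1)^{−l} if j > i; here b(K, m) = binom(K, m) if 0 ≤ m ≤ K and 0 otherwise (so all sums are finite). Define the N × N real matrix G by G(i, j)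 = e^{−t} ∑_{l=0}^{i−j} (−1)^l binom(i−j, l) · τ_t(x_i − i + l) if j ≤ i, and G(i, j) = e^{−t} ∑_{l=0}^{∞} binom(l + j − i − 1, j − i − 1) · τ_t(x_i − i + l) if j > i, where τ_t(m) = t^m/m! for m ≥ 0 and τ_t(m) = 0 for m < 0 (the infinite series converge). Then lim_{M→∞} det(A_M) = det(G). -/
open Filter Topology

noncomputable def KM (t : ℝ) (M : ℕ) : ℕ := ⌊(M : ℝ) * t⌋.toNat

lemma KM_cast {t : ℝ} (ht : 0 < t) (M : ℕ) : ((KM t M : ℕ) : ℝ) = (⌊(M : ℝ) * t⌋ : ℝ) := by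
  have h0 : (0:ℤ) ≤ ⌊(M : ℝ) * t⌋ := Int.floor_nonneg.2 (by positivity)
  rw [KM]; exact_mod_cast Int.toNat_of_nonneg h0

lemma KM_le {t : ℝ} (ht : 0 < t) (M : ℕ) : ((KM t M : ℕ) : ℝ) ≤ (M : ℝ) * t := by
  rw [KM_cast ht]; exact Int.floor_le _

lemma lt_KM {t : ℝ} (ht : 0 < t) (M : ℕ) : (M : ℝ) * t - 1 ≤ ((KM t M : ℕ) : ℝ) := by
  rw [KM_cast ht]
  have := Int.sub_one_lt_floor ((M : ℝ) * t)
  linarith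

lemma tendsto_linear (t a e : ℝ) :
    Tendsto (fun M : ℕ => ((M : ℝ) * t - a) / ((M : ℝ) - e)) atTop (𝓝 t) := by
  have h1 : Tendsto (fun M : ℕ => ((M : ℝ) - e)) atTop atTop :=
    tendsto_atTop_add_const_right _ (-e) tendsto_natCast_atTop_atTop |>.congr (by intro x; ring_nf)
  have h2 : Tendsto (fun M : ℕ => ((M : ℝ) - e)⁻¹) atTop (𝓝 0) := h1.inv_tendsto_atTop
  have h3 : Tendsto (fun M : ℕ => t + (t * e - a) * ((M : ℝ) - e)⁻¹) atTop (𝓝 (t + (t * e - a) * 0)) :=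
    tendsto_const_nhds.add (h2.const_mul _)
  rw [mul_zero, add_zero] at h3
  refine h3.congr' ?_
  filter_upwards [h1.eventually_gt_atTop 0] with M hM
  have hne : (M : ℝ) - e ≠ 0 := ne_of_gt hM
  field_simp
  ring

lemma tendsto_KM_div {t : ℝ} (ht : 0 < t) (a e : ℝ) :
    Tendsto (fun M : ℕ => (((KM t M : ℕ) : ℝ) - a) / ((M : ℝ) - e)) atTop (𝓝 t) := by
  have h1 : Tendsto (fun M : ℕ => ((M : ℝ) - e)) atTop atTop :=
    tendsto_atTop_add_const_right _ (-e) tendsto_natCast_atTop_atTop |>.congr (by intro x; ring_nf)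
  refine tendsto_of_tendsto_of_tendsto_of_le_of_le' (tendsto_linear t (a+1) e) (tendsto_linear t a e) ?_ ?_
  · filter_upwards [h1.eventually_gt_atTop 0] with M hM
    have := lt_KM ht M
    exact (div_le_div_iff_of_pos_right hM).2 (by linarith)
  · filter_upwards [h1.eventually_gt_atTop 0] with M hM
    have := KM_le ht M
    exact (div_le_div_iff_of_pos_right hM).2 (by linarith)

lemma tendsto_prefactor {t : ℝ} (ht : 0 < t) :
    Tendsto (fun M : ℕ => (1 - 1 / (M : ℝ)) ^ (KM t M)) atTop (𝓝 (Real.exp (-t))) := by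
  have hKdiv : Tendsto (fun M : ℕ => ((KM t M : ℕ) : ℝ) / (M : ℝ)) atTop (𝓝 t) := by
    have := tendsto_KM_div ht 0 0
    simpa using this
  have hlog : Tendsto (fun M : ℕ => (M : ℝ) * Real.log (1 - 1 / (M : ℝ))) atTop (𝓝 (-1)) := by
    have h := (Real.tendsto_mul_log_one_add_div_atTop (-1)).comp
      (tendsto_natCast_atTop_atTop (R := ℝ))
    refine h.congr (fun M => ?_)
    simp [Function.comp, sub_eq_add_neg, neg_div]
  have h1 : Tendsto (fun M : ℕ => ((KM t M : ℕ) : ℝ) * Real.log (1 - 1 / (M : ℝ)))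
      atTop (𝓝 (-t)) := by
    have := hKdiv.mul hlog
    rw [show t * (-1) = -t by ring] at this
    refine this.congr' ?_
    filter_upwards [eventually_ge_atTop 1] with M hM
    have : (M : ℝ) ≠ 0 := by positivity
    field_simp
  have h2 := (Real.continuous_exp.tendsto _).comp h1
  refine h2.congr' ?_
  filter_upwards [eventually_ge_atTop 2] with M hM
  have hM2 : (2 : ℝ) ≤ (M : ℝ) := by exact_mod_cast hM
  have hpos : 0 < 1 - 1 / (M : ℝ) := by
    rw [sub_pos, div_lt_one (by linarith)]; linarith
  simp only [Function.comp]
  rw [mul_comm, Real.exp_mul, Real.exp_log hpos, Real.rpow_natCast]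

lemma tendsto_term {t : ℝ} (ht : 0 < t) (m : ℤ) :
    Tendsto (fun M : ℕ => binomExt (KM t M) m * ((M : ℝ) - 1) ^ (-m)) atTop
      (𝓝 (poissonWeight t m)) := by
  rcases lt_or_ge m 0 with hm | hm
  · have : (fun M : ℕ => binomExt (KM t M) m * ((M : ℝ) - 1) ^ (-m)) = fun _ => 0 := by
      funext M
      rw [binomExt, if_neg (by omega), zero_mul]
    rw [this, poissonWeight, if_neg (by omega)]
    exact tendsto_const_nhds
  · set n := m.toNat with hn
    have hmn : m = (n : ℤ) := by omega
    have hev : ∀ᶠ M : ℕ in atTop, (2 ≤ M ∧ n ≤ KM t M) := by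
      have hMt : Tendsto (fun M : ℕ => (M : ℝ) * t) atTop atTop :=
        Tendsto.atTop_mul_const ht (tendsto_natCast_atTop_atTop (R := ℝ))
      filter_upwards [eventually_ge_atTop 2, hMt.eventually_ge_atTop ((n : ℝ) + 1)] with M h2 hge
      refine ⟨h2, ?_⟩
      have : ((n : ℝ)) ≤ ((KM t M : ℕ) : ℝ) := by
        have := lt_KM ht M
        linarith
      exact_mod_cast this
    have hlim : Tendsto (fun M : ℕ => (1 / (n.factorial : ℝ)) *
        ∏ j ∈ Finset.range n, ((((KM t M : ℕ) : ℝ) - (j : ℝ)) / ((M : ℝ) - 1)))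
        atTop (𝓝 ((1 / (n.factorial : ℝ)) * t ^ n)) := by
      have hprod : Tendsto (fun M : ℕ =>
          ∏ j ∈ Finset.range n, ((((KM t M : ℕ) : ℝ) - (j : ℝ)) / ((M : ℝ) - 1)))
          atTop (𝓝 (∏ _j ∈ Finset.range n, t)) :=
        tendsto_finset_prod _ (fun j _ => tendsto_KM_div ht j 1)
      rw [Finset.prod_const, Finset.card_range] at hprod
      exact hprod.const_mul _
    have hpw : poissonWeight t m = (1 / (n.factorial : ℝ)) * t ^ n := by
      rw [poissonWeight, if_pos hm]; ring
    rw [hpw]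
    refine hlim.congr' ?_
    filter_upwards [hev] with M ⟨h2, hnK⟩
    have hM1 : (1 : ℝ) ≤ (M : ℝ) - 1 := by
      have : (2 : ℝ) ≤ (M : ℝ) := by exact_mod_cast h2
      linarith
    have hMne : ((M : ℝ) - 1) ≠ 0 := by linarith
    have hbin : binomExt (KM t M) m = ((KM t M).choose n : ℝ) := by
      rw [binomExt, if_pos ⟨hm, by exact_mod_cast hmn ▸ (Int.ofNat_le.2 hnK)⟩]
    have hzpow : ((M : ℝ) - 1) ^ (-m) = (((M : ℝ) - 1) ^ n)⁻¹ := by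
      rw [hmn, zpow_neg, zpow_natCast]
    have hchoose : ((KM t M).choose n : ℝ) * (n.factorial : ℝ) =
        ∏ j ∈ Finset.range n, (((KM t M : ℕ) : ℝ) - (j : ℝ)) := by
      have hdesc := Nat.descFactorial_eq_factorial_mul_choose (KM t M) n
      have hprod := Nat.descFactorial_eq_prod_range (KM t M) n
      have : (((KM t M).descFactorial n : ℕ) : ℝ) =
          ∏ j ∈ Finset.range n, (((KM t M : ℕ) : ℝ) - (j : ℝ)) := by
        rw [hprod]
        push_cast [Nat.cast_prod]
        refine Finset.prod_congr rfl (fun j hj => ?_)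
        have hj' : j ≤ KM t M := le_trans (Nat.le_of_lt_succ (Nat.lt_succ_of_lt (Finset.mem_range.1 hj))) hnK
        rw [Nat.cast_sub hj']
      rw [hdesc] at this
      push_cast at this ⊢
      linarith [this]
    rw [hbin, hzpow]
    rw [Finset.prod_div_distrib, Finset.prod_const, Finset.card_range]
    rw [← hchoose]
    have hfacne : (n.factorial : ℝ) ≠ 0 := by positivity
    field_simp

lemma binomExt_nonneg (K : ℕ) (m : ℤ) : 0 ≤ binomExt K m := by
  rw [binomExt]; split_ifs <;> positivity

lemma term_bound {t : ℝ} (ht : 0 < t) {M : ℕ} (hM : 2 ≤ M) (m : ℤ) :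
    binomExt (KM t M) m * ((M : ℝ) - 1) ^ (-m) ≤ Real.exp (4 * t) * (1 / 2 : ℝ) ^ m.toNat := by
  have hM2 : (2 : ℝ) ≤ (M : ℝ) := by exact_mod_cast hM
  have hMpos : (0 : ℝ) < (M : ℝ) - 1 := by linarith
  rw [binomExt]
  split_ifs with h
  · obtain ⟨h0, hK⟩ := h
    set n := m.toNat with hn
    have hmn : m = (n : ℤ) := by omega
    have hzpow : ((M : ℝ) - 1) ^ (-m) = (((M : ℝ) - 1) ^ n)⁻¹ := by
      rw [hmn, zpow_neg, zpow_natCast]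
    rw [hzpow, ← div_eq_mul_inv]
    have hA : (((KM t M).choose n : ℕ) : ℝ) ≤ ((KM t M : ℕ) : ℝ) ^ n / (n.factorial : ℝ) :=
      Nat.choose_le_pow_div n (KM t M)
    have hKM2 : ((KM t M : ℕ) : ℝ) ≤ 2 * t * ((M : ℝ) - 1) := by
      have h1 := KM_le ht M
      nlinarith
    have hpow : ((KM t M : ℕ) : ℝ) ^ n ≤ (2 * t) ^ n * ((M : ℝ) - 1) ^ n := by
      calc ((KM t M : ℕ) : ℝ) ^ n ≤ (2 * t * ((M : ℝ) - 1)) ^ n :=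
            pow_le_pow_left₀ (by positivity) hKM2 n
        _ = (2 * t) ^ n * ((M : ℝ) - 1) ^ n := mul_pow _ _ _
    have hC : (2 * t) ^ n / (n.factorial : ℝ) ≤ Real.exp (4 * t) * (1 / 2 : ℝ) ^ n := by
      have h4 : (4 * t) ^ n / (n.factorial : ℝ) ≤ Real.exp (4 * t) :=
        Real.pow_div_factorial_le_exp (4 * t) (by linarith) n
      have heq : (2 * t) ^ n = (4 * t) ^ n * (1 / 2 : ℝ) ^ n := by
        rw [← mul_pow]; ring_nf
      rw [heq, mul_div_right_comm]
      exact mul_le_mul_of_nonneg_right h4 (by positivity)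
    calc (((KM t M).choose n : ℕ) : ℝ) / ((M : ℝ) - 1) ^ n
        ≤ (((KM t M : ℕ) : ℝ) ^ n / (n.factorial : ℝ)) / ((M : ℝ) - 1) ^ n := by
          gcongr
      _ ≤ (((2 * t) ^ n * ((M : ℝ) - 1) ^ n) / (n.factorial : ℝ)) / ((M : ℝ) - 1) ^ n := by
          gcongr
      _ = (2 * t) ^ n / (n.factorial : ℝ) := by
          have : ((M : ℝ) - 1) ^ n ≠ 0 := by positivity
          field_simp
      _ ≤ Real.exp (4 * t) * (1 / 2 : ℝ) ^ n := hC
  · rw [zero_mul]; positivity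

lemma pow_half_le (m0 : ℤ) (l : ℕ) (h : 0 ≤ m0 + l) :
    ((1 : ℝ) / 2) ^ ((m0 + l).toNat) ≤ 2 ^ m0.natAbs * ((1 : ℝ) / 2) ^ l := by
  have hln : l ≤ m0.natAbs + (m0 + l).toNat := by omega
  have h2l : (2 : ℝ) ^ l ≤ 2 ^ (m0.natAbs + (m0 + l).toNat) :=
    pow_le_pow_right₀ one_le_two hln
  rw [pow_add] at h2l
  simp only [one_div, inv_pow]
  have hpos2 : (0:ℝ) < 2 ^ l := by positivity
  rw [inv_le_iff_one_le_mul₀ (by positivity)]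
  nlinarith [h2l, mul_inv_cancel₀ (ne_of_gt hpos2), inv_pos.2 hpos2]

lemma tendsto_entry_lower {t : ℝ} (ht : 0 < t) (m0 : ℤ) (n : ℕ) (c : ℕ → ℝ) :
    Tendsto (fun M : ℕ => (1 - 1 / (M : ℝ)) ^ (KM t M) * ((M : ℝ) - 1) ^ (-m0) *
      ∑ l ∈ Finset.range n, c l * binomExt (KM t M) (m0 + l) * ((M : ℝ) - 1) ^ (-(l : ℤ)))
      atTop (𝓝 (Real.exp (-t) * ∑ l ∈ Finset.range n, c l * poissonWeight t (m0 + l))) := by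
  have hsum : Tendsto (fun M : ℕ => ∑ l ∈ Finset.range n,
      c l * (binomExt (KM t M) (m0 + l) * ((M : ℝ) - 1) ^ (-(m0 + l))))
      atTop (𝓝 (∑ l ∈ Finset.range n, c l * poissonWeight t (m0 + l))) :=
    tendsto_finset_sum _ (fun l _ => (tendsto_term ht (m0 + l)).const_mul _)
  refine ((tendsto_prefactor ht).mul hsum).congr' ?_
  filter_upwards [eventually_ge_atTop 2] with M hM
  have hM2 : (2 : ℝ) ≤ (M : ℝ) := by exact_mod_cast hM
  have hMne : ((M : ℝ) - 1) ≠ 0 := by linarith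
  rw [mul_assoc]
  congr 1
  rw [Finset.mul_sum]
  refine Finset.sum_congr rfl (fun l _ => ?_)
  rw [neg_add, zpow_add₀ hMne]
  ring

lemma tendsto_entry_upper {t : ℝ} (ht : 0 < t) (m0 : ℤ) (d : ℕ) (hd : 1 ≤ d) :
    Tendsto (fun M : ℕ => (1 - 1 / (M : ℝ)) ^ (KM t M) * ((M : ℝ) - 1) ^ (-m0) *
      ∑' l : ℕ, ((l + d - 1).choose (d - 1) : ℝ) * binomExt (KM t M) (m0 + l) *
        ((M : ℝ) - 1) ^ (-(l : ℤ)))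
      atTop (𝓝 (Real.exp (-t) *
        ∑' l : ℕ, ((l + d - 1).choose (d - 1) : ℝ) * poissonWeight t (m0 + l))) := by
  set c : ℕ → ℝ := fun l => ((l + d - 1).choose (d - 1) : ℝ) with hc
  set bound : ℕ → ℝ := fun l =>
    Real.exp (4 * t) * 2 ^ m0.natAbs * (((l + d : ℕ) : ℝ) ^ (d - 1) * ((1 : ℝ) / 2) ^ l)
    with hbound
  have hSummable : Summable bound := by
    have h0 : Summable (fun n : ℕ => (n : ℝ) ^ (d - 1) * ((1 : ℝ) / 2) ^ n) :=
      summable_pow_mul_geometric_of_norm_lt_one (d - 1)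
        (by rw [Real.norm_eq_abs, abs_of_pos (by norm_num : (0:ℝ) < 1/2)]; norm_num)
    have h1 := (summable_nat_add_iff (f := fun n : ℕ => (n : ℝ) ^ (d - 1) * ((1 : ℝ) / 2) ^ n) d).2 h0
    have h2 := h1.mul_left ((2 : ℝ) ^ d)
    have h2d : (2 : ℝ) ^ d * ((1 : ℝ) / 2) ^ d = 1 := by rw [← mul_pow]; norm_num
    have h3 : Summable (fun l : ℕ => (((l + d : ℕ) : ℝ)) ^ (d - 1) * ((1 : ℝ) / 2) ^ l) := by
      refine h2.congr (fun l => ?_)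
      calc (2 : ℝ) ^ d * (((l + d : ℕ) : ℝ) ^ (d - 1) * ((1 : ℝ) / 2) ^ (l + d))
          = (((l + d : ℕ) : ℝ) ^ (d - 1) * ((1 : ℝ) / 2) ^ l) * ((2 : ℝ) ^ d * ((1 : ℝ) / 2) ^ d) := by
            rw [pow_add]; ring
        _ = _ := by rw [h2d, mul_one]
    exact h3.mul_left _
  have hab : ∀ l : ℕ, Tendsto (fun M : ℕ =>
      c l * (binomExt (KM t M) (m0 + l) * ((M : ℝ) - 1) ^ (-(m0 + l)))) atTop
      (𝓝 (c l * poissonWeight t (m0 + l))) :=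
    fun l => (tendsto_term ht (m0 + l)).const_mul _
  have h_bound : ∀ᶠ M : ℕ in atTop, ∀ l : ℕ,
      ‖c l * (binomExt (KM t M) (m0 + l) * ((M : ℝ) - 1) ^ (-(m0 + l)))‖ ≤ bound l := by
    filter_upwards [eventually_ge_atTop 2] with M hM l
    have hM2 : (2 : ℝ) ≤ (M : ℝ) := by exact_mod_cast hM
    have hTnn : 0 ≤ binomExt (KM t M) (m0 + l) * ((M : ℝ) - 1) ^ (-(m0 + l)) :=
      mul_nonneg (binomExt_nonneg _ _) (zpow_nonneg (by linarith) _)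
    have hcnn : 0 ≤ c l := by rw [hc]; positivity
    rw [Real.norm_eq_abs, abs_of_nonneg (mul_nonneg hcnn hTnn)]
    rcases lt_or_ge (m0 + l) 0 with hml | hml
    · have : binomExt (KM t M) (m0 + l) = 0 := by rw [binomExt, if_neg (by omega)]
      rw [this, zero_mul, mul_zero]
      rw [hbound]; positivity
    · have hT : binomExt (KM t M) (m0 + l) * ((M : ℝ) - 1) ^ (-(m0 + l)) ≤
          Real.exp (4 * t) * (2 ^ m0.natAbs * ((1 : ℝ) / 2) ^ l) := by
        calc binomExt (KM t M) (m0 + l) * ((M : ℝ) - 1) ^ (-(m0 + l))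
            ≤ Real.exp (4 * t) * ((1 : ℝ) / 2) ^ ((m0 + l).toNat) := term_bound ht hM _
          _ ≤ Real.exp (4 * t) * (2 ^ m0.natAbs * ((1 : ℝ) / 2) ^ l) := by
              exact mul_le_mul_of_nonneg_left (pow_half_le m0 l hml) (le_of_lt (Real.exp_pos _))
      have hcle : c l ≤ (((l + d : ℕ) : ℝ)) ^ (d - 1) := by
        rw [hc]
        have h1 : (l + d - 1).choose (d - 1) ≤ (l + d - 1) ^ (d - 1) := Nat.choose_le_pow _ _
        have h2 : (l + d - 1) ^ (d - 1) ≤ (l + d) ^ (d - 1) :=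
          Nat.pow_le_pow_left (by omega) _
        calc ((l + d - 1).choose (d - 1) : ℝ) ≤ ((l + d - 1) ^ (d - 1) : ℕ) := by exact_mod_cast h1
          _ ≤ (((l + d) ^ (d - 1) : ℕ) : ℝ) := by exact_mod_cast h2
          _ = (((l + d : ℕ) : ℝ)) ^ (d - 1) := by push_cast; ring
      calc c l * (binomExt (KM t M) (m0 + l) * ((M : ℝ) - 1) ^ (-(m0 + l)))
          ≤ (((l + d : ℕ) : ℝ)) ^ (d - 1) *
            (Real.exp (4 * t) * (2 ^ m0.natAbs * ((1 : ℝ) / 2) ^ l)) :=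
            mul_le_mul hcle hT hTnn (by positivity)
        _ = bound l := by rw [hbound]; ring
  have htsum := tendsto_tsum_of_dominated_convergence hSummable hab h_bound
  refine ((tendsto_prefactor ht).mul htsum).congr' ?_
  filter_upwards [eventually_ge_atTop 2] with M hM
  have hM2 : (2 : ℝ) ≤ (M : ℝ) := by exact_mod_cast hM
  have hMne : ((M : ℝ) - 1) ≠ 0 := by linarith
  rw [mul_assoc]
  congr 1
  rw [← tsum_mul_left]
  refine tsum_congr (fun l => ?_)
  rw [neg_add, zpow_add₀ hMne]
  ring

/-- with `A_M` the rescaled discrete-time Bernoulli-TASEP transition matrix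
(time step `1/M`, equal rates, initial positions `y_i = i`) and `G` the matrix of
Schütz kernel functions in summation form (rows/columns `1`-indexed via `i ↦ i+1` on
`Fin N`), `lim_{M→∞} det(A_M) = det(G)`. -/
theorem stmt_15 (N : ℕ) (hN : 1 ≤ N) (t : ℝ) (ht : 0 < t) (x : Fin N → ℤ) :
    Tendsto
      (fun M : ℕ =>
        Matrix.det (Matrix.of (fun i j : Fin N =>
          (1 - 1 / (M : ℝ)) ^ (⌊(M : ℝ) * t⌋.toNat) *
            ((M : ℝ) - 1) ^ (-(x i - ((i : ℕ) + 1 : ℤ))) *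
            (if (j : ℕ) ≤ (i : ℕ) then
              ∑ l ∈ Finset.range ((i : ℕ) - (j : ℕ) + 1),
                (-1 : ℝ) ^ l * (((i : ℕ) - (j : ℕ)).choose l : ℝ) *
                  binomExt ⌊(M : ℝ) * t⌋.toNat (x i - ((i : ℕ) + 1 : ℤ) + l) *
                  ((M : ℝ) - 1) ^ (-(l : ℤ))
            else
              ∑' l : ℕ,
                ((l + ((j : ℕ) - (i : ℕ)) - 1).choose (((j : ℕ) - (i : ℕ)) - 1) : ℝ) *
                  binomExt ⌊(M : ℝ) * t⌋.toNat (x i - ((i : ℕ) + 1 : ℤ) + l) *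
                  ((M : ℝ) - 1) ^ (-(l : ℤ))))))
      atTop
      (𝓝 (Matrix.det (Matrix.of (fun i j : Fin N =>
        if (j : ℕ) ≤ (i : ℕ) then
          Real.exp (-t) *
            ∑ l ∈ Finset.range ((i : ℕ) - (j : ℕ) + 1),
              (-1 : ℝ) ^ l * (((i : ℕ) - (j : ℕ)).choose l : ℝ) *
                poissonWeight t (x i - ((i : ℕ) + 1 : ℤ) + l)
        else
          Real.exp (-t) *
            ∑' l : ℕ,
              ((l + ((j : ℕ) - (i : ℕ)) - 1).choose (((j : ℕ) - (i : ℕ)) - 1) : ℝ) *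
                poissonWeight t (x i - ((i : ℕ) + 1 : ℤ) + l))))) := by
  have hA : Tendsto (fun M : ℕ =>
      (Matrix.of (fun i j : Fin N =>
        (1 - 1 / (M : ℝ)) ^ (⌊(M : ℝ) * t⌋.toNat) *
          ((M : ℝ) - 1) ^ (-(x i - ((i : ℕ) + 1 : ℤ))) *
          (if (j : ℕ) ≤ (i : ℕ) then
            ∑ l ∈ Finset.range ((i : ℕ) - (j : ℕ) + 1),
              (-1 : ℝ) ^ l * (((i : ℕ) - (j : ℕ)).choose l : ℝ) *
                binomExt ⌊(M : ℝ) * t⌋.toNat (x i - ((i : ℕ) + 1 : ℤ) + l) *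
                ((M : ℝ) - 1) ^ (-(l : ℤ))
          else
            ∑' l : ℕ,
              ((l + ((j : ℕ) - (i : ℕ)) - 1).choose (((j : ℕ) - (i : ℕ)) - 1) : ℝ) *
                binomExt ⌊(M : ℝ) * t⌋.toNat (x i - ((i : ℕ) + 1 : ℤ) + l) *
                ((M : ℝ) - 1) ^ (-(l : ℤ)))) : Matrix (Fin N) (Fin N) ℝ)) atTop
      (𝓝 (Matrix.of (fun i j : Fin N =>
        if (j : ℕ) ≤ (i : ℕ) then
          Real.exp (-t) *
            ∑ l ∈ Finset.range ((i : ℕ) - (j : ℕ) + 1),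
              (-1 : ℝ) ^ l * (((i : ℕ) - (j : ℕ)).choose l : ℝ) *
                poissonWeight t (x i - ((i : ℕ) + 1 : ℤ) + l)
        else
          Real.exp (-t) *
            ∑' l : ℕ,
              ((l + ((j : ℕ) - (i : ℕ)) - 1).choose (((j : ℕ) - (i : ℕ)) - 1) : ℝ) *
                poissonWeight t (x i - ((i : ℕ) + 1 : ℤ) + l)))) := by
    refine tendsto_pi_nhds.2 ?_
    intro i
    rw [tendsto_pi_nhds]
    intro j
    simp only [Matrix.of_apply]
    by_cases h : (j : ℕ) ≤ (i : ℕ)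
    · simp only [if_pos h]
      have hmul : Tendsto (fun M : ℕ =>
          (1 - 1 / (M : ℝ)) ^ (KM t M) * ((M : ℝ) - 1) ^ (-(x i - ((i : ℕ) + 1 : ℤ))) *
          ∑ l ∈ Finset.range ((i : ℕ) - (j : ℕ) + 1),
            ((fun l : ℕ => (-1 : ℝ) ^ l * (((i : ℕ) - (j : ℕ)).choose l : ℝ)) l) *
              binomExt (KM t M) ((x i - ((i : ℕ) + 1 : ℤ)) + l) *
              ((M : ℝ) - 1) ^ (-(l : ℤ))) atTop
          (𝓝 (Real.exp (-t) * ∑ l ∈ Finset.range ((i : ℕ) - (j : ℕ) + 1),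
            ((fun l : ℕ => (-1 : ℝ) ^ l * (((i : ℕ) - (j : ℕ)).choose l : ℝ)) l) *
              poissonWeight t ((x i - ((i : ℕ) + 1 : ℤ)) + l))) :=
        tendsto_entry_lower ht (x i - ((i : ℕ) + 1 : ℤ)) ((i : ℕ) - (j : ℕ) + 1) _
      exact hmul
    · simp only [if_neg h]
      have hd : 1 ≤ (j : ℕ) - (i : ℕ) := by omega
      exact tendsto_entry_upper ht (x i - ((i : ℕ) + 1 : ℤ)) ((j : ℕ) - (i : ℕ)) hd
  exact ((Continuous.matrix_det continuous_id).tendsto _).comp hA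
end
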